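/- arXiv:2604.04550 — 2 statements merged into one kernel-verified Lean document; each statement's English description precedes it below -/
import Mathlib

section
/- Let M be a matroid and 𝓜 a modular cut of M. The truncation Tr_𝓜(M), defined by the rank function rk'(S) = rk(S) − 1 if cl_M(S) ∈ 𝓜 and rk'(S) = rk(S) otherwise, is a matroid, and it equals the contraction (M ∪_𝓜 e)/e of the single-element extension at the new element e. -/
variable {α : Type*}

/-- The rank of a set in a matroid: the supremum of the cardinalities of
independent subsets of the set. -/
noncomputable def Matroid.mrk (M : Matroid α) (X : Set α) : ℕ :=
  sSup (Set.ncard '' {I | M.Indep I ∧ I ⊆ X})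

/-- A *modular cut* of a matroid `M`: an upward-closed (within the lattice of
flats) family of flats of `M` which is closed under meets of modular pairs. -/
def Matroid.IsModularCutFam (M : Matroid α) (𝓜 : Set (Set α)) : Prop :=
  (∀ F ∈ 𝓜, M.IsFlat F) ∧
  (∀ F ∈ 𝓜, ∀ G : Set α, M.IsFlat G → F ⊆ G → G ∈ 𝓜) ∧
  (∀ F ∈ 𝓜, ∀ G ∈ 𝓜,
    M.mrk (F ∪ G) + M.mrk (F ∩ G) = M.mrk F + M.mrk G → F ∩ G ∈ 𝓜)

/-- `N` is the single-element extension `M ∪_𝓜 e` of `M` along the modular cut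
`𝓜`: it is the matroid on `M.E ∪ {e}` whose rank function satisfies
`rk_N S = rk_M S` for `S ⊆ M.E`, and `rk_N (S ∪ {e}) = rk_M S` if
`cl_M S ∈ 𝓜`, and `rk_M S + 1` otherwise. -/
def Matroid.IsSingleElemExt (M : Matroid α) (𝓜 : Set (Set α)) (e : α)
    (N : Matroid α) : Prop :=
  N.E = insert e M.E ∧
  (∀ S : Set α, S ⊆ M.E → N.mrk S = M.mrk S) ∧
  (∀ S : Set α, S ⊆ M.E → M.closure S ∈ 𝓜 → N.mrk (insert e S) = M.mrk S) ∧
  (∀ S : Set α, S ⊆ M.E → M.closure S ∉ 𝓜 →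
    N.mrk (insert e S) = M.mrk S + 1)

namespace Matroid

open Set

section Rank

variable {M : Matroid α} {I J X Y F G : Set α} {x y : α}

lemma mrk_eq_of_forall {n : ℕ} (h1 : ∃ I, M.Indep I ∧ I ⊆ X ∧ I.ncard = n)
    (h2 : ∀ I, M.Indep I → I ⊆ X → I.ncard ≤ n) : M.mrk X = n := by
  obtain ⟨I, hI, hIX, rfl⟩ := h1
  have hmem : I.ncard ∈ Set.ncard '' {I | M.Indep I ∧ I ⊆ X} := ⟨I, ⟨hI, hIX⟩, rfl⟩
  have hub : ∀ m ∈ Set.ncard '' {I | M.Indep I ∧ I ⊆ X}, m ≤ I.ncard := by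
    rintro m ⟨J, ⟨hJ, hJX⟩, rfl⟩; exact h2 J hJ hJX
  exact le_antisymm (csSup_le ⟨_, hmem⟩ hub) (le_csSup ⟨_, hub⟩ hmem)

variable [M.Finite]

lemma indep_finite' (hI : M.Indep I) : I.Finite := M.set_finite I hI.subset_ground

lemma IsBasis'.mrk_eq (hI : M.IsBasis' I X) : M.mrk X = I.ncard := by
  refine mrk_eq_of_forall ⟨I, hI.indep, hI.subset, rfl⟩ fun J hJ hJX => ?_
  obtain ⟨J', hJ', hJJ'⟩ := hJ.subset_isBasis'_of_subset hJX
  have h1 : J'.ncard = I.ncard := by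
    rw [Set.ncard_def, hJ'.encard_eq_encard hI, ← Set.ncard_def]
  exact h1 ▸ Set.ncard_le_ncard hJJ' (indep_finite' hJ'.indep)

lemma IsBasis.mrk_eq' (hI : M.IsBasis I X) : M.mrk X = I.ncard := hI.isBasis'.mrk_eq

lemma mrk_indep_eq (hI : M.Indep I) : M.mrk I = I.ncard := hI.isBasis_self.mrk_eq'

lemma mrk_empty_eq : M.mrk ∅ = 0 := by
  rw [mrk_indep_eq M.empty_indep, Set.ncard_empty]

lemma mrk_mono (h : X ⊆ Y) : M.mrk X ≤ M.mrk Y := by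
  obtain ⟨I, hI⟩ := M.exists_isBasis' X
  obtain ⟨J, hJ, hIJ⟩ := hI.indep.subset_isBasis'_of_subset (hI.subset.trans h)
  rw [hI.mrk_eq, hJ.mrk_eq]
  exact Set.ncard_le_ncard hIJ (indep_finite' hJ.indep)

lemma mrk_closure_eq' (X : Set α) : M.mrk (M.closure X) = M.mrk X := by
  obtain ⟨I, hI⟩ := M.exists_isBasis' X
  rw [hI.mrk_eq, hI.isBasis_closure_right.mrk_eq']

lemma closure_flat' (M : Matroid α) (X : Set α) : M.IsFlat (M.closure X) := by
  haveI : Nonempty ↥{F : Set α | M.IsFlat F ∧ X ∩ M.E ⊆ F} :=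
    ⟨⟨M.E, M.ground_isFlat, Set.inter_subset_right⟩⟩
  rw [closure_def, Set.sInter_eq_iInter]
  exact IsFlat.iInter fun F => F.2.1

lemma closure_subset_flat (hF : M.IsFlat F) (hXF : X ⊆ F) : M.closure X ⊆ F :=
  Set.sInter_subset_of_mem ⟨hF, Set.inter_subset_left.trans hXF⟩

lemma IsFlat.inter' (hF : M.IsFlat F) (hG : M.IsFlat G) : M.IsFlat (F ∩ G) := by
  have h1 : M.closure (F ∩ G) ⊆ F :=
    (M.closure_subset_closure Set.inter_subset_left).trans hF.closure.subset
  have h2 : M.closure (F ∩ G) ⊆ G :=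
    (M.closure_subset_closure Set.inter_subset_right).trans hG.closure.subset
  have h3 : M.closure (F ∩ G) = F ∩ G :=
    subset_antisymm (Set.subset_inter h1 h2)
      (M.subset_closure _ (Set.inter_subset_left.trans hF.subset_ground))
  exact h3 ▸ closure_flat' M (F ∩ G)

lemma mrk_insert_lt_of_not_mem_closure (hX : X ⊆ M.E) (hx : x ∈ M.E)
    (h : x ∉ M.closure X) : M.mrk X + 1 ≤ M.mrk (insert x X) := by
  obtain ⟨I, hI⟩ := M.exists_isBasis X hX
  have hclI : M.closure I = M.closure X := hI.closure_eq_closure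
  have hxI : x ∉ I := fun hxI => h (hclI ▸ M.subset_closure I hI.indep.subset_ground hxI)
  have hind : M.Indep (insert x I) := by
    rw [hI.indep.insert_indep_iff_of_notMem hxI]
    exact ⟨hx, fun hxc => h (hclI ▸ hxc)⟩
  have h1 : M.mrk (insert x I) ≤ M.mrk (insert x X) :=
    mrk_mono (Set.insert_subset_insert hI.subset)
  rw [mrk_indep_eq hind, Set.ncard_insert_of_notMem hxI (indep_finite' hI.indep)] at h1
  rw [hI.mrk_eq']
  exact h1

lemma mem_closure_of_mrk_le (hX : X ⊆ M.E) (hx : x ∈ M.E)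
    (h : M.mrk (insert x X) ≤ M.mrk X) : x ∈ M.closure X := by
  by_contra hc
  have := mrk_insert_lt_of_not_mem_closure hX hx hc
  omega

lemma mrk_insert_of_mem_closure (h : x ∈ M.closure X) :
    M.mrk (insert x X) = M.mrk X := by
  rw [← mrk_closure_eq' (insert x X), closure_insert_eq_of_mem_closure h, mrk_closure_eq']

lemma flat_eq_closure_of_mrk_le (hF : M.IsFlat F) (hXF : X ⊆ F) (h : M.mrk F ≤ M.mrk X) :
    F = M.closure X := by
  refine subset_antisymm (fun z hz => ?_) (closure_subset_flat hF hXF)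
  exact mem_closure_of_mrk_le (hXF.trans hF.subset_ground) (hF.subset_ground hz)
    ((mrk_mono (Set.insert_subset hz hXF)).trans h)

lemma mrk_submod (hX : X ⊆ M.E) (hY : Y ⊆ M.E) :
    M.mrk (X ∪ Y) + M.mrk (X ∩ Y) ≤ M.mrk X + M.mrk Y := by
  obtain ⟨I, hI⟩ := M.exists_isBasis (X ∩ Y) ((Set.inter_subset_left).trans hX)
  obtain ⟨J, hJ, hIJ⟩ := hI.indep.subset_isBasis_of_subset
    (hI.subset.trans (Set.inter_subset_left.trans Set.subset_union_left))
    (Set.union_subset hX hY)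
  have hJfin : J.Finite := indep_finite' hJ.indep
  have hXr : (J ∩ X).ncard ≤ M.mrk X := by
    have h1 := mrk_mono (M := M) (Set.inter_subset_right (s := J) (t := X))
    rwa [mrk_indep_eq (hJ.indep.subset Set.inter_subset_left)] at h1
  have hYr : (J ∩ Y).ncard ≤ M.mrk Y := by
    have h1 := mrk_mono (M := M) (Set.inter_subset_right (s := J) (t := Y))
    rwa [mrk_indep_eq (hJ.indep.subset Set.inter_subset_left)] at h1
  have hun : (J ∩ X) ∪ (J ∩ Y) = J := by
    rw [← Set.inter_union_distrib_left]
    exact Set.inter_eq_self_of_subset_left hJ.subset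
  have hin : (J ∩ X) ∩ (J ∩ Y) = J ∩ (X ∩ Y) := by
    ext z; simp only [Set.mem_inter_iff]; tauto
  have hie := Set.ncard_union_add_ncard_inter (J ∩ X) (J ∩ Y)
    (hJfin.subset Set.inter_subset_left) (hJfin.subset Set.inter_subset_left)
  rw [hun, hin] at hie
  have hIsub : I ⊆ J ∩ (X ∩ Y) := Set.subset_inter hIJ hI.subset
  have hIle : I.ncard ≤ (J ∩ (X ∩ Y)).ncard :=
    Set.ncard_le_ncard hIsub (hJfin.subset Set.inter_subset_left)
  rw [hJ.mrk_eq', hI.mrk_eq']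
  omega

end Rank

section ModCut

variable {M : Matroid α} [M.Finite] {𝓜 : Set (Set α)} {B I J : Set α} {x y : α}

lemma pair_del (h𝓜 : M.IsModularCutFam 𝓜) (hB : M.Indep B)
    (hx : x ∈ B) (hy : y ∈ B) (hxy : x ≠ y)
    (hFx : M.closure (B \ {x}) ∈ 𝓜) (hFy : M.closure (B \ {y}) ∈ 𝓜) :
    M.closure (B \ {x, y}) ∈ 𝓜 := by
  have hBfin : B.Finite := indep_finite' hB
  have hBE : B ⊆ M.E := hB.subset_ground
  set F := M.closure (B \ {x}) with hF
  set G := M.closure (B \ {y}) with hG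
  have hcx : (B \ {x}).ncard + 1 = B.ncard := Set.ncard_diff_singleton_add_one hx hBfin
  have hcy : (B \ {y}).ncard + 1 = B.ncard := Set.ncard_diff_singleton_add_one hy hBfin
  have hxy' : B \ {x, y} = (B \ {x}) \ {y} := by
    rw [Set.diff_diff, Set.singleton_union]
  have hcxy : (B \ {x, y}).ncard + 1 = (B \ {x}).ncard := by
    rw [hxy']
    exact Set.ncard_diff_singleton_add_one ⟨hy, fun h => hxy (h.symm)⟩ (hBfin.subset Set.diff_subset)
  have hrF : M.mrk F = (B \ {x}).ncard := by
    rw [hF, mrk_closure_eq', mrk_indep_eq (hB.subset Set.diff_subset)]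
  have hrG : M.mrk G = (B \ {y}).ncard := by
    rw [hG, mrk_closure_eq', mrk_indep_eq (hB.subset Set.diff_subset)]
  have hBFG : B ⊆ F ∪ G := by
    intro z hz
    by_cases hzx : z = x
    · right
      exact M.subset_closure _ (Set.diff_subset.trans hBE) ⟨hz, by simp [hzx, hxy]⟩
    · left
      exact M.subset_closure _ (Set.diff_subset.trans hBE) ⟨hz, by simp [hzx]⟩
  have hFGcl : F ∪ G ⊆ M.closure B :=
    Set.union_subset (closure_subset_flat (closure_flat' M B)
        (Set.diff_subset.trans (M.subset_closure B hBE)))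
      (closure_subset_flat (closure_flat' M B)
        (Set.diff_subset.trans (M.subset_closure B hBE)))
  have hr1 : B.ncard ≤ M.mrk (F ∪ G) := by
    have := mrk_mono (M := M) hBFG
    rwa [mrk_indep_eq hB] at this
  have hr2 : M.mrk (F ∪ G) ≤ B.ncard := by
    have := mrk_mono (M := M) hFGcl
    rwa [mrk_closure_eq', mrk_indep_eq hB] at this
  have hsubFG : B \ {x, y} ⊆ F ∩ G := by
    refine Set.subset_inter ?_ ?_
    · exact (fun z hz => M.subset_closure _ (Set.diff_subset.trans hBE)
        ⟨hz.1, fun h => hz.2 (Or.inl (by simpa using h))⟩)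
    · exact (fun z hz => M.subset_closure _ (Set.diff_subset.trans hBE)
        ⟨hz.1, fun h => hz.2 (Or.inr (by simpa using h))⟩)
  have hr3 : (B \ {x, y}).ncard ≤ M.mrk (F ∩ G) := by
    have := mrk_mono (M := M) hsubFG
    rwa [mrk_indep_eq (hB.subset Set.diff_subset)] at this
  have hsm := mrk_submod (X := F) (Y := G)
    (by rw [hF]; exact M.closure_subset_ground _)
    (by rw [hG]; exact M.closure_subset_ground _)
  have heq : M.mrk (F ∪ G) + M.mrk (F ∩ G) = M.mrk F + M.mrk G := by omega
  have hFG𝓜 : F ∩ G ∈ 𝓜 := h𝓜.2.2 F hFx G hFy heq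
  have hFGflat : M.IsFlat (F ∩ G) := (closure_flat' M _).inter' (closure_flat' M _)
  have : F ∩ G = M.closure (B \ {x, y}) := by
    refine flat_eq_closure_of_mrk_le hFGflat hsubFG ?_
    rw [mrk_indep_eq (hB.subset Set.diff_subset)]
    omega
  exact this ▸ hFG𝓜

lemma exists_del (h𝓜 : M.IsModularCutFam 𝓜) (hp : M.closure ∅ ∉ 𝓜) :
    ∀ n (B : Set α), B.ncard = n → M.Indep B → B.Nonempty →
      ∃ x ∈ B, M.closure (B \ {x}) ∉ 𝓜 := by
  intro n
  induction n with
  | zero =>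
    intro B hc hB hne
    rw [Set.ncard_eq_zero (indep_finite' hB)] at hc
    exact absurd (hc ▸ hne) (by simp)
  | succ n ih =>
    intro B hc hB hne
    by_contra! h
    obtain ⟨y, hy⟩ := hne
    rcases eq_or_ne B {y} with rfl | hBy
    · have := h y rfl
      rw [Set.diff_self] at this
      exact hp this
    · have hzB : ∃ z ∈ B, z ≠ y := by
        by_contra! hall
        exact hBy (subset_antisymm (fun z hz => hall z hz) (Set.singleton_subset_iff.mpr hy))
      obtain ⟨z, hzB, hzy⟩ := hzB
      have hcard : (B \ {y}).ncard = n := by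
        have := Set.ncard_diff_singleton_add_one hy (indep_finite' hB)
        omega
      obtain ⟨x, hxB', hx𝓜⟩ := ih (B \ {y}) hcard (hB.subset Set.diff_subset) ⟨z, hzB, hzy⟩
      have hBxy : (B \ {y}) \ {x} = B \ {x, y} := by
        rw [Set.diff_diff, Set.singleton_union, Set.pair_comm]
      exact hx𝓜 (hBxy ▸ pair_del h𝓜 hB hxB'.1 hy (fun hxy => hxB'.2 (by simp [hxy]))
        (h x hxB'.1) (h y hy))

lemma trunc_aug (h𝓜 : M.IsModularCutFam 𝓜)
    (hI : M.Indep I) (hIc : M.closure I ∉ 𝓜)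
    (hJ : M.Indep J) (hJc : M.closure J ∉ 𝓜) (hlt : I.ncard < J.ncard) :
    ∃ x ∈ J, x ∉ I ∧ M.Indep (insert x I) ∧ M.closure (insert x I) ∉ 𝓜 := by
  by_contra! h
  have hIfin : I.Finite := indep_finite' hI
  have hJfin : J.Finite := indep_finite' hJ
  have hencard : I.encard < J.encard := by
    rw [← hIfin.cast_ncard_eq, ← hJfin.cast_ncard_eq]
    exact_mod_cast hlt
  obtain ⟨x₀, hx₀JI, hx₀I⟩ := hI.augment hJ hencard
  have hx₀𝓜 : M.closure (insert x₀ I) ∈ 𝓜 := h x₀ hx₀JI.1 hx₀JI.2 hx₀I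
  have hsub : J ⊆ M.closure (insert x₀ I) := by
    intro z hz
    have hzE : z ∈ M.E := hJ.subset_ground hz
    by_cases hzI : z ∈ I
    · exact M.subset_closure _ hx₀I.subset_ground (Set.mem_insert_of_mem _ hzI)
    by_cases hzind : M.Indep (insert z I)
    · by_cases hzx : z = x₀
      · exact M.subset_closure _ hx₀I.subset_ground (hzx ▸ Set.mem_insert _ _)
      by_contra hzcl
      have hznot : z ∉ insert x₀ I := by simp [hzx, hzI]
      have hBind : M.Indep (insert z (insert x₀ I)) := by
        rw [hx₀I.insert_indep_iff_of_notMem hznot]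
        exact ⟨hzE, hzcl⟩
      have hzm : M.closure (insert z I) ∈ 𝓜 := h z hz hzI hzind
      set B := insert z (insert x₀ I) with hBdef
      have hBz : B \ {z} = insert x₀ I := Set.insert_diff_self_of_notMem hznot
      have hBx : B \ {x₀} = insert z I := by
        rw [hBdef, ← Set.insert_diff_singleton_comm hzx,
          Set.insert_diff_self_of_notMem hx₀JI.2]
      have hBzx : B \ {z, x₀} = I := by
        rw [show ({z, x₀} : Set α) = {z} ∪ {x₀} from (Set.singleton_union ..).symm,
          ← Set.diff_diff, hBz, Set.insert_diff_self_of_notMem hx₀JI.2]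
      have := pair_del h𝓜 hBind (Set.mem_insert _ _)
        (Set.mem_insert_of_mem _ (Set.mem_insert _ _)) hzx
        (hBz ▸ hx₀𝓜) (hBx ▸ hzm)
      rw [hBzx] at this
      exact hIc this
    · have hzcl : z ∈ M.closure I := by
        rw [hI.insert_indep_iff_of_notMem hzI] at hzind
        simp only [Set.mem_diff, not_and, not_not] at hzind
        exact hzind hzE
      exact M.closure_subset_closure (Set.subset_insert _ _) hzcl
  have hcard : (insert x₀ I).ncard = I.ncard + 1 :=
    Set.ncard_insert_of_notMem hx₀JI.2 hIfin
  have hFcl : M.closure (insert x₀ I) = M.closure J := by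
    refine flat_eq_closure_of_mrk_le (closure_flat' M _) hsub ?_
    rw [mrk_closure_eq', mrk_indep_eq hx₀I, mrk_indep_eq hJ]
    omega
  exact hJc (hFcl ▸ hx₀𝓜)

end ModCut

end Matroid

open Matroid Set in
theorem truncation_exists_eq_contract (M : Matroid α) [M.Finite]
    (𝓜 : Set (Set α)) (h𝓜 : M.IsModularCutFam 𝓜)
    (hproper : M.closure ∅ ∉ 𝓜) (e : α) (he : e ∉ M.E) :
    ∃ T : Matroid α, T.E = M.E ∧
      (∀ S : Set α, S ⊆ M.E → M.closure S ∈ 𝓜 → T.mrk S = M.mrk S - 1) ∧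
      (∀ S : Set α, S ⊆ M.E → M.closure S ∉ 𝓜 → T.mrk S = M.mrk S) ∧
      (∀ N : Matroid α, M.IsSingleElemExt 𝓜 e N →
        ∀ S : Set α, S ⊆ M.E →
          T.mrk S = N.mrk (insert e S) - N.mrk {e}) := by
  classical
  have hE : M.E.Finite := M.ground_finite
  set TInd : Set α → Prop := fun I => M.Indep I ∧ M.closure I ∉ 𝓜 with hTInd
  have hsub : ∀ ⦃I J : Set α⦄, TInd J → I ⊆ J → TInd I := by
    rintro I J ⟨hJ, hJc⟩ hIJ
    refine ⟨hJ.subset hIJ, fun hc => hJc ?_⟩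
    exact h𝓜.2.1 _ hc _ (closure_flat' M J) (M.closure_subset_closure hIJ)
  have haug : ∀ ⦃I J : Set α⦄, TInd I → TInd J → I.ncard < J.ncard →
      ∃ x ∈ J, x ∉ I ∧ TInd (insert x I) := by
    rintro I J ⟨hI, hIc⟩ ⟨hJ, hJc⟩ hlt
    obtain ⟨x, hxJ, hxI, h1, h2⟩ := trunc_aug h𝓜 hI hIc hJ hJc hlt
    exact ⟨x, hxJ, hxI, h1, h2⟩
  set T : Matroid α := (IndepMatroid.ofFinite hE TInd ⟨M.empty_indep, hproper⟩
    hsub haug (fun I hI => hI.1.subset_ground)).matroid with hT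
  have hTindep : ∀ I, T.Indep I ↔ TInd I := by
    intro I; rw [hT]; simp
  have hTE : T.E = M.E := by rw [hT]; simp
  have hT2 : ∀ S : Set α, S ⊆ M.E → M.closure S ∉ 𝓜 → T.mrk S = M.mrk S := by
    intro S hS hc
    obtain ⟨I, hI⟩ := M.exists_isBasis S hS
    refine mrk_eq_of_forall ⟨I, ?_, hI.subset, by rw [hI.mrk_eq']⟩ fun J hJ hJS => ?_
    · rw [hTindep]
      exact ⟨hI.indep, hI.closure_eq_closure ▸ hc⟩
    · rw [hTindep] at hJ
      have h1 := mrk_mono (M := M) hJS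
      rwa [mrk_indep_eq hJ.1] at h1
  have hT1 : ∀ S : Set α, S ⊆ M.E → M.closure S ∈ 𝓜 → T.mrk S = M.mrk S - 1 := by
    intro S hS hc
    obtain ⟨I, hI⟩ := M.exists_isBasis S hS
    have hrk : M.mrk S = I.ncard := hI.mrk_eq'
    have hIne : I.Nonempty := by
      rcases Set.eq_empty_or_nonempty I with rfl | hne
      · exact absurd (hI.closure_eq_closure ▸ hc) hproper
      · exact hne
    obtain ⟨x, hxI, hx𝓜⟩ := exists_del h𝓜 hproper I.ncard I rfl hI.indep hIne
    have hxcard : (I \ {x}).ncard + 1 = I.ncard :=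
      Set.ncard_diff_singleton_add_one hxI (indep_finite' hI.indep)
    refine mrk_eq_of_forall ⟨I \ {x}, ?_, Set.diff_subset.trans hI.subset, by omega⟩
      fun J hJ hJS => ?_
    · rw [hTindep]
      exact ⟨hI.indep.subset Set.diff_subset, hx𝓜⟩
    · rw [hTindep] at hJ
      have hle : J.ncard ≤ M.mrk S := by
        have h1 := mrk_mono (M := M) hJS
        rwa [mrk_indep_eq hJ.1] at h1
      have hne : J.ncard ≠ M.mrk S := by
        intro hcard
        obtain ⟨J', hJ', hJJ'⟩ := hJ.1.subset_isBasis_of_subset hJS hS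
        have hJ'card : M.mrk S = J'.ncard := hJ'.mrk_eq'
        have : J = J' := Set.eq_of_subset_of_ncard_le hJJ'
          (by omega) (indep_finite' hJ'.indep)
        subst this
        exact hJ.2 (hJ'.closure_eq_closure ▸ hc)
      omega
  refine ⟨T, hTE, hT1, hT2, ?_⟩
  rintro N ⟨hNE, hr, hrm, hrnm⟩ S hS
  have hNFin : N.Finite := ⟨hNE ▸ hE.insert e⟩
  have he1 : N.mrk {e} = 1 := by
    have h0 := hrnm ∅ (Set.empty_subset _) hproper
    rw [show (insert e (∅ : Set α)) = {e} from by ext; simp, mrk_empty_eq] at h0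
    exact h0
  by_cases hc : M.closure S ∈ 𝓜
  · rw [hT1 S hS hc, hrm S hS hc, he1]
  · rw [hT2 S hS hc, hrnm S hS hc, he1]
    omega
end

section
/- Let L be a geometric lattice with building set 𝓖, and suppose 𝓖 ⊆ 𝓖' are two building sets of L. Then there exists a chain of building sets 𝓖 = 𝓖_p ⊂ 𝓖_{p−1} ⊂ ⋯ ⊂ 𝓖_0 = 𝓖' such that each consecutive containment adds exactly one element. -/
variable {L : Type*} [CompleteLattice L] [Fintype L]

/-- A finite lattice is geometric if it is atomistic and (upper)
semimodular. -/
def IsGeometricLattice (L : Type*) [CompleteLattice L] [Fintype L] : Prop :=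
  IsAtomistic L ∧ ∀ a b : L, a ⊓ b ⋖ a → b ⋖ a ⊔ b

/-- The maximal elements of `{G ∈ 𝓖 : G ≤ F}`. -/
def maxUnder (𝓖 : Set L) (F : L) : Set L :=
  {G | G ∈ 𝓖 ∧ G ≤ F ∧ ∀ G' ∈ 𝓖, G' ≤ F → G ≤ G' → G' = G}

/-- `𝓖 ⊆ L \ {⊥}` is a *building set* if for every `F ≠ ⊥`, the join map
from the product of the intervals `[⊥, G]`, `G` ranging over the maximal
elements of `𝓖` below `F`, to the interval `[⊥, F]` is an order
isomorphism. -/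
def IsBuildingSet (𝓖 : Set L) : Prop :=
  (∀ G ∈ 𝓖, G ≠ ⊥) ∧
  ∀ F : L, F ≠ ⊥ →
    ∃ φ : (∀ G : maxUnder 𝓖 F, Set.Iic (G : L)) ≃o Set.Iic F,
      ∀ h, (φ h : L) = ⨆ G, ((h G : L))


lemma exists_maxUnder (𝓖 : Set L) {F H : L} (hH : H ∈ 𝓖) (hHF : H ≤ F) :
    ∃ M ∈ maxUnder 𝓖 F, H ≤ M := by
  obtain ⟨a, ha, hmax⟩ := Set.Finite.exists_maximalFor (id : L → L)
    {G | G ∈ 𝓖 ∧ G ≤ F ∧ H ≤ G} (Set.toFinite _) ⟨H, hH, hHF, le_rfl⟩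
  exact ⟨a, ⟨ha.1, ha.2.1, fun G' hG' hG'F haG' =>
    le_antisymm (hmax ⟨hG', hG'F, ha.2.2.trans haG'⟩ haG') haG'⟩, ha.2.2⟩

lemma maxUnder_inf_bot {𝓖 : Set L} (h𝓖 : IsBuildingSet 𝓖) {F : L} (hF : F ≠ ⊥)
    {M M' : L} (hM : M ∈ maxUnder 𝓖 F) (hM' : M' ∈ maxUnder 𝓖 F)
    (hne : M ≠ M') : M ⊓ M' = ⊥ := by
  classical
  obtain ⟨φ, hφ⟩ := h𝓖.2 F hF
  -- the tuple mapping to M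
  set eM : ∀ G : maxUnder 𝓖 F, Set.Iic (G : L) :=
    fun G => ⟨if (G : L) = M then (G : L) else ⊥, by split <;> simp⟩ with heM
  set eM' : ∀ G : maxUnder 𝓖 F, Set.Iic (G : L) :=
    fun G => ⟨if (G : L) = M' then (G : L) else ⊥, by split <;> simp⟩ with heM'
  have hMF : M ≤ F := hM.2.1
  have hM'F : M' ≤ F := hM'.2.1
  have hφM : φ eM = ⟨M, hMF⟩ := by
    apply Subtype.ext
    rw [hφ]
    apply le_antisymm
    · exact iSup_le fun G => by
        simp only [heM]; split <;> simp_all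
    · have := le_iSup (fun G : maxUnder 𝓖 F => (eM G : L)) ⟨M, hM⟩
      simpa [heM] using this
  have hφM' : φ eM' = ⟨M', hM'F⟩ := by
    apply Subtype.ext
    rw [hφ]
    apply le_antisymm
    · exact iSup_le fun G => by
        simp only [heM']; split <;> simp_all
    · have := le_iSup (fun G : maxUnder 𝓖 F => (eM' G : L)) ⟨M', hM'⟩
      simpa [heM'] using this
  set x : Set.Iic F := ⟨M ⊓ M', le_trans inf_le_left hMF⟩ with hx
  have h1 : φ.symm x ≤ eM := by
    have : x ≤ φ eM := by rw [hφM]; exact inf_le_left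
    simpa using φ.symm.monotone this
  have h2 : φ.symm x ≤ eM' := by
    have : x ≤ φ eM' := by rw [hφM']; exact inf_le_right
    simpa using φ.symm.monotone this
  have hcomp : ∀ G, (φ.symm x G : L) = ⊥ := by
    intro G
    have hle1 : (φ.symm x G : L) ≤ eM G := h1 G
    have hle2 : (φ.symm x G : L) ≤ eM' G := h2 G
    by_cases hG : (G : L) = M
    · have : (eM' G : L) = ⊥ := by simp [heM', hG, hne]
      exact le_bot_iff.mp (this ▸ hle2)
    · have : (eM G : L) = ⊥ := by simp [heM, hG]
      exact le_bot_iff.mp (this ▸ hle1)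
  have : (φ (φ.symm x) : L) = ⊥ := by
    rw [hφ]
    simp [hcomp]
  rw [φ.apply_symm_apply] at this
  exact this

set_option maxHeartbeats 1000000 in
lemma isBuildingSet_diff_singleton {𝓖 𝓖' : Set L} (h𝓖 : IsBuildingSet 𝓖)
    (h𝓖' : IsBuildingSet 𝓖') (hsub : 𝓖 ⊆ 𝓖') {G : L} (hG : G ∈ 𝓖') (hGn : G ∉ 𝓖)
    (hmin : ∀ H ∈ 𝓖', H ≤ G → H ∉ 𝓖 → H = G) :
    IsBuildingSet (𝓖' \ {G}) := by
  classical
  constructor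
  · exact fun H hH => h𝓖'.1 H hH.1
  intro F hF
  by_cases hGm : G ∈ maxUnder 𝓖' F
  · -- hard case
    obtain ⟨φ', hφ'⟩ := h𝓖'.2 F hF
    obtain ⟨φG, hφG⟩ := h𝓖.2 G (h𝓖'.1 G hG)
    have hGF : G ≤ F := hGm.2.1
    have hTsubG' : ∀ t ∈ maxUnder 𝓖 G, t ∈ 𝓖' \ {G} := by
      intro t ht
      refine ⟨hsub ht.1, ?_⟩
      simp only [Set.mem_singleton_iff]
      rintro rfl; exact hGn ht.1
    have hbelow : ∀ H ∈ 𝓖' \ {G}, H ≤ G → H ∈ 𝓖 := by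
      intro H hH hHG
      by_contra hHn
      exact hH.2 (hmin H hH.1 hHG hHn)
    have hT : ∀ t ∈ maxUnder 𝓖 G, t ∈ maxUnder (𝓖' \ {G}) F := by
      intro t ht
      refine ⟨hTsubG' t ht, ht.2.1.trans hGF, ?_⟩
      intro H hH hHF htH
      obtain ⟨M, hM, hHM⟩ := exists_maxUnder 𝓖' hH.1 hHF
      have hHG : H ≤ G := by
        by_cases hMG : M = G
        · exact hMG ▸ hHM
        · exfalso
          have hb : M ⊓ G = ⊥ := maxUnder_inf_bot h𝓖' hF hM hGm hMG
          have : t ≤ M ⊓ G := le_inf ((htH.trans hHM)) ht.2.1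
          exact h𝓖.1 t ht.1 (le_bot_iff.mp (hb ▸ this))
      exact ht.2.2 H (hbelow H hH hHG) hHG htH
    have hS' : ∀ M ∈ maxUnder 𝓖' F, M ≠ G → M ∈ maxUnder (𝓖' \ {G}) F := by
      intro M hM hMG
      exact ⟨⟨hM.1, hMG⟩, hM.2.1, fun H hH hHF hMH => hM.2.2 H hH.1 hHF hMH⟩
    have hcov : ∀ H ∈ maxUnder (𝓖' \ {G}) F,
        H ∈ maxUnder 𝓖 G ∨ (H ∈ maxUnder 𝓖' F ∧ H ≠ G) := by
      intro H hH
      obtain ⟨M, hM, hHM⟩ := exists_maxUnder 𝓖' hH.1.1 hH.2.1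
      by_cases hMG : M = G
      · left
        subst hMG
        have hHG : H ∈ 𝓖 := hbelow H hH.1 hHM
        obtain ⟨t, ht, hHt⟩ := exists_maxUnder 𝓖 hHG hHM
        have := hH.2.2 t (hTsubG' t ht) (ht.2.1.trans hGF) hHt
        exact this ▸ ht
      · right
        have hMS'' := hH.2.2 M ⟨hM.1, hMG⟩ hM.2.1 hHM
        exact hMS'' ▸ ⟨hM, hMG⟩
    have hdisjT : ∀ t ∈ maxUnder 𝓖 G, t ∉ maxUnder 𝓖' F := by
      intro t ht hc
      have h1 := hc.2.2 G hG hGF ht.2.1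
      have h2 := ht.1
      rw [← h1] at h2
      exact hGn h2
    have hneG : ∀ H ∈ maxUnder (𝓖' \ {G}) F, H ≠ G := fun H hH => hH.1.2
    set k : (∀ H : maxUnder (𝓖' \ {G}) F, Set.Iic (H : L)) →
        (∀ M : maxUnder 𝓖' F, Set.Iic (M : L)) :=
      fun h M => if hMG : (M : L) = G then
          ⟨(φG (fun t => h ⟨t.1, hT t.1 t.2⟩) : L),
            le_trans (φG (fun t => h ⟨t.1, hT t.1 t.2⟩)).2 (le_of_eq hMG.symm)⟩
        else h ⟨M.1, hS' M.1 M.2 hMG⟩ with hk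
    set sec : Set.Iic F → (∀ H : maxUnder (𝓖' \ {G}) F, Set.Iic (H : L)) :=
      fun x H => if hHT : (H : L) ∈ maxUnder 𝓖 G then
          φG.symm (φ'.symm x ⟨G, hGm⟩) ⟨H.1, hHT⟩
        else φ'.symm x ⟨H.1, ((hcov H.1 H.2).resolve_left hHT).1⟩ with hsec
    -- value of `k` at the index `G`
    have hkG : ∀ h, (k h ⟨G, hGm⟩ : L) = (φG (fun t => h ⟨t.1, hT t.1 t.2⟩) : L) := by
      intro h
      simp only [hk]
      split
      · rfl
      · next hc => exact absurd (by trivial) hc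
    have hkGfull : ∀ h, k h ⟨G, hGm⟩ = φG (fun t => h ⟨t.1, hT t.1 t.2⟩) :=
      fun h => Subtype.ext (hkG h)
    have hki : ∀ x, k (sec x) = φ'.symm x := by
      intro x
      funext M
      by_cases hMG : (M : L) = G
      · have hM2 : M = ⟨G, hGm⟩ := Subtype.ext hMG
        subst hM2
        rw [hkGfull]
        have hres : (fun t : maxUnder 𝓖 G => sec x ⟨t.1, hT t.1 t.2⟩)
            = φG.symm (φ'.symm x ⟨G, hGm⟩) := by
          funext t
          simp only [hsec]
          rw [dif_pos t.2]
        rw [hres, φG.apply_symm_apply]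
      · simp only [hk]
        rw [dif_neg hMG]
        have hHT : (M : L) ∉ maxUnder 𝓖 G := fun hc => hdisjT _ hc M.2
        simp only [hsec]
        rw [dif_neg hHT]
    have hik : ∀ h, sec (φ' (k h)) = h := by
      intro h
      funext H
      simp only [hsec, φ'.symm_apply_apply]
      by_cases hHT : (H : L) ∈ maxUnder 𝓖 G
      · rw [dif_pos hHT, hkGfull, φG.symm_apply_apply]
      · rw [dif_neg hHT]
        simp only [hk]
        rw [dif_neg (hneG H.1 H.2)]
    have hkmono : ∀ {h h'}, h ≤ h' → k h ≤ k h' := by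
      intro h h' hle M
      simp only [hk]
      by_cases hMG : (M : L) = G
      · rw [dif_pos hMG, dif_pos hMG]
        exact φG.monotone (fun t => hle ⟨t.1, hT t.1 t.2⟩)
      · rw [dif_neg hMG, dif_neg hMG]
        exact hle _
    have hkrev : ∀ {h h'}, k h ≤ k h' → h ≤ h' := by
      intro h h' hle H
      rcases hcov H.1 H.2 with hHT | ⟨hHS, hHG⟩
      · have h1 := hle ⟨G, hGm⟩
        rw [hkGfull, hkGfull] at h1
        exact φG.le_iff_le.mp h1 ⟨H.1, hHT⟩
      · have h1 := hle ⟨H.1, hHS⟩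
        simp only [hk] at h1
        rw [dif_neg hHG, dif_neg hHG] at h1
        exact h1
    refine ⟨⟨⟨fun h => φ' (k h), sec, hik,
      fun x => by show φ' (k (sec x)) = x; rw [hki, φ'.apply_symm_apply]⟩, ?_⟩, ?_⟩
    · intro h h'
      constructor
      · intro hle
        exact hkrev (φ'.le_iff_le.mp hle)
      · intro hle
        exact φ'.monotone (hkmono hle)
    · intro h
      show (φ' (k h) : L) = _
      rw [hφ']
      apply le_antisymm
      · apply iSup_le
        intro M
        by_cases hMG : (M : L) = G
        · have hM2 : M = ⟨G, hGm⟩ := Subtype.ext hMG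
          subst hM2
          rw [hkG, hφG]
          apply iSup_le
          intro t
          exact le_iSup (fun H : maxUnder (𝓖' \ {G}) F => (h H : L)) ⟨t.1, hT t.1 t.2⟩
        · have : (k h M : L) = (h ⟨M.1, hS' M.1 M.2 hMG⟩ : L) := by
            simp only [hk]; rw [dif_neg hMG]
          rw [this]
          exact le_iSup (fun H : maxUnder (𝓖' \ {G}) F => (h H : L)) ⟨M.1, hS' M.1 M.2 hMG⟩
      · apply iSup_le
        intro H
        rcases hcov H.1 H.2 with hHT | ⟨hHS, hHG⟩
        · have h2 : (h H : L) ≤ (k h ⟨G, hGm⟩ : L) := by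
            rw [hkG, hφG]
            exact le_iSup (fun t : maxUnder 𝓖 G => ((h ⟨t.1, hT t.1 t.2⟩ : L))) ⟨H.1, hHT⟩
          exact h2.trans (le_iSup (fun M : maxUnder 𝓖' F => (k h M : L)) ⟨G, hGm⟩)
        · have h2 : (h H : L) ≤ (k h ⟨H.1, hHS⟩ : L) := by
            have : (k h ⟨H.1, hHS⟩ : L) = (h ⟨H.1, hS' H.1 hHS hHG⟩ : L) := by
              simp only [hk]; rw [dif_neg hHG]
            rw [this]
          exact h2.trans (le_iSup (fun M : maxUnder 𝓖' F => (k h M : L)) ⟨H.1, hHS⟩)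
  · have hset : maxUnder (𝓖' \ {G}) F = maxUnder 𝓖' F := by
      apply Set.eq_of_subset_of_subset
      · intro H hH
        obtain ⟨M, hM, hHM⟩ := exists_maxUnder 𝓖' hH.1.1 hH.2.1
        have hMG : M ≠ G := fun hc => hGm (hc ▸ hM)
        have := hH.2.2 M ⟨hM.1, hMG⟩ hM.2.1 hHM
        exact this ▸ hM
      · intro M hM
        have hMG : M ≠ G := fun hc => hGm (hc ▸ hM)
        exact ⟨⟨hM.1, hMG⟩, hM.2.1, fun H hH hHF hMH => hM.2.2 H hH.1 hHF hMH⟩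
    rw [hset]
    exact h𝓖'.2 F hF

lemma building_aux (𝓖 : Set L) (h𝓖 : IsBuildingSet 𝓖) :
    ∀ n (𝓖' : Set L), IsBuildingSet 𝓖' → 𝓖 ⊆ 𝓖' → (𝓖' \ 𝓖).ncard = n →
    ∃ (p : ℕ) (c : ℕ → Set L), c p = 𝓖 ∧ c 0 = 𝓖' ∧
      (∀ i ≤ p, IsBuildingSet (c i)) ∧
      ∀ i < p, ∃ G : L, G ∉ c (i + 1) ∧ c i = insert G (c (i + 1)) := by
  intro n
  induction n with
  | zero =>
    intro 𝓖' h𝓖' hsub hcard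
    have hempty : 𝓖' \ 𝓖 = ∅ := Set.ncard_eq_zero (Set.toFinite _) |>.mp hcard
    have heq : 𝓖' = 𝓖 := by
      apply Set.eq_of_subset_of_subset _ hsub
      intro x hx
      by_contra hxn
      exact absurd (Set.mem_diff_of_mem hx hxn) (by rw [hempty]; exact Set.notMem_empty x)
    exact ⟨0, fun _ => 𝓖, rfl, heq.symm ▸ rfl, fun i _ => h𝓖, fun i hi => absurd hi (by omega)⟩
  | succ n ih =>
    intro 𝓖' h𝓖' hsub hcard
    have hne : (𝓖' \ 𝓖).Nonempty := by
      rw [← Set.ncard_pos (Set.toFinite _)] at *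
      omega
    obtain ⟨G, hGd, hGmin⟩ := Set.Finite.exists_minimalFor (id : L → L) (𝓖' \ 𝓖)
      (Set.toFinite _) hne
    have hmin : ∀ H ∈ 𝓖', H ≤ G → H ∉ 𝓖 → H = G := by
      intro H hH hHG hHn
      exact le_antisymm hHG (hGmin ⟨hH, hHn⟩ hHG)
    have h𝓖'' : IsBuildingSet (𝓖' \ {G}) :=
      isBuildingSet_diff_singleton h𝓖 h𝓖' hsub hGd.1 hGd.2 hmin
    have hsub'' : 𝓖 ⊆ 𝓖' \ {G} := by
      intro x hx
      exact ⟨hsub hx, fun hc => hGd.2 (hc ▸ hx)⟩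
    have hcard'' : ((𝓖' \ {G}) \ 𝓖).ncard = n := by
      have : (𝓖' \ {G}) \ 𝓖 = (𝓖' \ 𝓖) \ {G} := by
        ext x; simp only [Set.mem_diff, Set.mem_singleton_iff]; tauto
      rw [this, Set.ncard_diff_singleton_of_mem hGd, hcard]
      omega
    obtain ⟨p, c, hcp, hc0, hcb, hcs⟩ := ih (𝓖' \ {G}) h𝓖'' hsub'' hcard''
    refine ⟨p + 1, fun i => if i = 0 then 𝓖' else c (i - 1), ?_, ?_, ?_, ?_⟩
    · simp only [Nat.succ_ne_zero, if_false]
      simpa using hcp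
    · simp
    · intro i hi
      by_cases h0 : i = 0
      · simp [h0, h𝓖']
      · simp only [h0, if_false]
        exact hcb (i - 1) (by omega)
    · intro i hi
      by_cases h0 : i = 0
      · subst h0
        refine ⟨G, ?_, ?_⟩
        · simp only [Nat.one_ne_zero, if_false]
          rw [hc0]
          exact fun hc => hc.2 rfl
        · have e1 : insert G (𝓖' \ {G}) = 𝓖' := by
            rw [Set.insert_diff_singleton]
            exact Set.insert_eq_self.mpr hGd.1
          beta_reduce
          rw [if_pos rfl, if_neg (by omega : ¬(0 + 1 = 0)),
            show (0 + 1 : ℕ) - 1 = 0 from rfl, hc0, e1]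
      · obtain ⟨G', hG'n, heq⟩ := hcs (i - 1) (by omega)
        refine ⟨G', ?_, ?_⟩
        · simp only [Nat.add_eq_zero, h0, false_and, if_false]
          rw [show i + 1 - 1 = i from rfl, show i - 1 + 1 = i from by omega] at *
          exact hG'n
        · simp only [h0, if_false, Nat.add_eq_zero, one_ne_zero, and_false]
          rw [show i + 1 - 1 = i from rfl, show i - 1 + 1 = i from by omega] at *
          exact heq

/-- if `𝓖 ⊆ 𝓖'` are two building sets of a finite geometric
lattice, then there is a filtration `𝓖 = 𝓖_p ⊂ ⋯ ⊂ 𝓖_0 = 𝓖'` of building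
sets in which each consecutive containment adds exactly one element. -/
theorem building_set_filtration (hL : IsGeometricLattice L)
    (𝓖 𝓖' : Set L) (h𝓖 : IsBuildingSet 𝓖) (h𝓖' : IsBuildingSet 𝓖')
    (hsub : 𝓖 ⊆ 𝓖') :
    ∃ (p : ℕ) (c : ℕ → Set L), c p = 𝓖 ∧ c 0 = 𝓖' ∧
      (∀ i ≤ p, IsBuildingSet (c i)) ∧
      ∀ i < p, ∃ G : L, G ∉ c (i + 1) ∧ c i = insert G (c (i + 1)) := by
  exact building_aux 𝓖 h𝓖 (𝓖' \ 𝓖).ncard 𝓖' h𝓖' hsub rfl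
end
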